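/- arXiv:2102.12021 — 2 statements merged into one kernel-verified Lean document; each statement's English description precedes it below -/
import Mathlib

section
/- Let p ∈ (0,2) and let f, g : [0,∞) → [0,∞) be non-increasing functions such that ∫_t^∞ g(s)² ds ≤ ∫_t^∞ f(s)² ds for all t ≥ 0, and suppose sup_{t>0} t^{1/p} f(t) = M < ∞. Then sup_{t>0} t^{1/p} g(t) ≤ 2^{1/p} (2-p)^{-1/p} M. -/
open MeasureTheory

/-- If `0 < p < 2`, `f, g : [0,∞) → [0,∞)` are non-increasing, the tail integrals satisfy
`∫_t^∞ g² ≤ ∫_t^∞ f²` for all `t ≥ 0`, and `t^{1/p} f(t) ≤ M` for all `t > 0`, then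
`t^{1/p} g(t) ≤ 2^{1/p} (2-p)^{-1/p} M` for all `t > 0`. -/
theorem stmt_0 (p : ℝ) (hp : 0 < p) (hp2 : p < 2)
    (f g : ℝ → ℝ)
    (hf_mono : AntitoneOn f (Set.Ici 0)) (hg_mono : AntitoneOn g (Set.Ici 0))
    (hf_nonneg : ∀ t ∈ Set.Ici (0:ℝ), 0 ≤ f t) (hg_nonneg : ∀ t ∈ Set.Ici (0:ℝ), 0 ≤ g t)
    (hf_int : ∀ t : ℝ, 0 ≤ t → IntegrableOn (fun s => f s ^ 2) (Set.Ioi t))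
    (hg_int : ∀ t : ℝ, 0 ≤ t → IntegrableOn (fun s => g s ^ 2) (Set.Ioi t))
    (htail : ∀ t : ℝ, 0 ≤ t →
      ∫ s in Set.Ioi t, g s ^ 2 ≤ ∫ s in Set.Ioi t, f s ^ 2)
    (M : ℝ) (hM : ∀ t : ℝ, 0 < t → t ^ (1/p) * f t ≤ M) :
    ∀ t : ℝ, 0 < t → t ^ (1/p) * g t ≤ (2:ℝ) ^ (1/p) * (2 - p) ^ (-(1/p)) * M := by
  intro t ht
  have hp2' : (0:ℝ) < 2 - p := by linarith
  have hMnn : 0 ≤ M := by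
    have h1 := hM 1 one_pos
    have h2 : (0:ℝ) ≤ f 1 := hf_nonneg 1 (by norm_num)
    rw [Real.one_rpow, one_mul] at h1
    linarith
  set s₀ : ℝ := (2 - p)/2 * t with hs₀def
  have hs₀pos : 0 < s₀ := by positivity
  have hs₀lt : s₀ < t := by
    rw [hs₀def]; nlinarith
  have hgt0 : 0 ≤ g t := hg_nonneg t ht.le
  have hr : (-2/p : ℝ) < -1 := by
    rw [div_lt_iff₀ hp]; linarith
  -- Step 1 : constant lower bound on [s₀, t]
  have hgint : IntegrableOn (fun s => g s ^ 2) (Set.Ioc s₀ t) :=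
    (hg_int s₀ hs₀pos.le).mono_set Set.Ioc_subset_Ioi_self
  have h1 : g t ^ 2 * (t - s₀) ≤ ∫ s in Set.Ioc s₀ t, g s ^ 2 := by
    have hmono : ∫ _ in Set.Ioc s₀ t, (g t ^ 2 : ℝ) ≤ ∫ s in Set.Ioc s₀ t, g s ^ 2 := by
      refine setIntegral_mono_on (integrableOn_const ?_) hgint
        measurableSet_Ioc ?_
      · rw [Real.volume_Ioc]; exact ENNReal.ofReal_ne_top
      · intro s hs
        have hs0 : (0:ℝ) ≤ s := le_of_lt (hs₀pos.trans hs.1)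
        exact pow_le_pow_left₀ hgt0 (hg_mono hs0 ht.le hs.2) 2
    calc g t ^ 2 * (t - s₀) = ∫ _ in Set.Ioc s₀ t, (g t ^ 2 : ℝ) := by
          rw [setIntegral_const, measureReal_def, Real.volume_Ioc,
            ENNReal.toReal_ofReal (by linarith), smul_eq_mul]; ring
      _ ≤ _ := hmono
  -- Step 2 : extend to Ioi s₀
  have h2 : ∫ s in Set.Ioc s₀ t, g s ^ 2 ≤ ∫ s in Set.Ioi s₀, g s ^ 2 :=
    setIntegral_mono_set (hg_int s₀ hs₀pos.le)
      (Filter.Eventually.of_forall fun s => sq_nonneg _)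
      (HasSubset.Subset.eventuallyLE Set.Ioc_subset_Ioi_self)
  -- Step 3 : tail comparison
  have h3 := htail s₀ hs₀pos.le
  -- Step 4 : bound f by the power function
  have h4 : ∫ s in Set.Ioi s₀, f s ^ 2 ≤ ∫ s in Set.Ioi s₀, M ^ 2 * s ^ (-2/p) := by
    refine setIntegral_mono_on (hf_int s₀ hs₀pos.le)
      ((integrableOn_Ioi_rpow_of_lt hr hs₀pos).const_mul _) measurableSet_Ioi ?_
    intro s hs
    have hs0 : 0 < s := hs₀pos.trans hs
    have hfs : f s ≤ M * s ^ (-(1/p)) := by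
      have hMs := hM s hs0
      have hsp : (0:ℝ) < s ^ (1/p) := Real.rpow_pos_of_pos hs0 _
      rw [Real.rpow_neg hs0.le, ← div_eq_mul_inv, le_div_iff₀ hsp, mul_comm]
      exact hMs
    calc f s ^ 2 ≤ (M * s ^ (-(1/p))) ^ 2 :=
          pow_le_pow_left₀ (hf_nonneg s hs0.le) hfs 2
      _ = M ^ 2 * s ^ (-2/p) := by
          rw [mul_pow, ← Real.rpow_natCast (s ^ (-(1/p))) 2, ← Real.rpow_mul hs0.le,
            show (-(1/p) * ((2:ℕ):ℝ) : ℝ) = -2/p by push_cast; ring]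
  -- Step 5 : evaluate the power integral
  have h5 : ∫ s in Set.Ioi s₀, M ^ 2 * s ^ (-2/p)
      = M ^ 2 * (-s₀ ^ (-2/p + 1) / (-2/p + 1)) := by
    rw [integral_const_mul, integral_Ioi_rpow_of_lt hr hs₀pos]
  have key : g t ^ 2 * (t - s₀) ≤ M ^ 2 * (-s₀ ^ (-2/p + 1) / (-2/p + 1)) := by
    rw [← h5]; exact le_trans h1 (le_trans h2 (le_trans h3 h4))
  -- Final algebra
  have hc : (0:ℝ) < -(-2/p + 1) := by
    have : (1:ℝ) < 2/p := by rw [lt_div_iff₀ hp]; linarith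
    linarith
  have hcpos : (0:ℝ) < (2-p)/2 := by positivity
  have e2 : t ^ (2/p : ℝ) * t ^ (-2/p + 1 : ℝ) = t := by
    rw [← Real.rpow_add ht, show (2/p + (-2/p+1) : ℝ) = 1 by ring, Real.rpow_one]
  have hfin : t ^ (2/p : ℝ) * g t ^ 2 ≤ 2 ^ (2/p : ℝ) * (2 - p) ^ (-2/p : ℝ) * M ^ 2 := by
    have hts : t - s₀ = p/2 * t := by rw [hs₀def]; ring
    have hts' : (0:ℝ) < t - s₀ := by linarith
    have htp : (0:ℝ) < t ^ (2/p : ℝ) := Real.rpow_pos_of_pos ht _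
    have key2 : g t ^ 2 * (t - s₀) ≤ M ^ 2 * (s₀ ^ (-2/p+1 : ℝ) / (-(-2/p+1))) := by
      rw [show (-s₀ ^ (-2/p + 1 : ℝ) / (-2/p + 1)) = s₀ ^ (-2/p+1 : ℝ) / (-(-2/p+1)) from by
        rw [neg_div, ← div_neg]] at key
      exact key
    have hg2 : g t ^ 2 ≤ M ^ 2 * (s₀ ^ (-2/p+1 : ℝ) / (-(-2/p+1))) / (t - s₀) := by
      rw [le_div_iff₀ hts']; exact key2
    have key3 : t ^ (2/p : ℝ) * g t ^ 2
        ≤ t ^ (2/p : ℝ) * (M ^ 2 * (s₀ ^ (-2/p+1 : ℝ) / (-(-2/p+1))) / (t - s₀)) :=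
      mul_le_mul_of_nonneg_left hg2 htp.le
    refine key3.trans_eq ?_
    have h1' : s₀ ^ (-2/p+1 : ℝ) = ((2-p)/2 : ℝ) ^ (-2/p+1 : ℝ) * t ^ (-2/p+1 : ℝ) := by
      rw [hs₀def, Real.mul_rpow hcpos.le ht.le]
    have h3' : ((2-p)/2 : ℝ) ^ (-2/p+1 : ℝ) = ((2-p)/2 : ℝ) ^ (-2/p : ℝ) * ((2-p)/2) := by
      rw [Real.rpow_add hcpos, Real.rpow_one]
    have h4' : ((2-p)/2 : ℝ) ^ (-2/p : ℝ) = (2-p) ^ (-2/p : ℝ) * 2 ^ (2/p : ℝ) := by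
      rw [Real.div_rpow hp2'.le (by norm_num), show ((-2:ℝ)/p) = -(2/p) by ring,
        Real.rpow_neg (by norm_num : (0:ℝ) ≤ 2), div_eq_mul_inv, inv_inv]
    have hd : (-(-2/p + 1) : ℝ) * (p/2) = (2-p)/2 := by field_simp; ring
    rw [h1', h3', h4', hts]
    have hBdef : t ^ (-2/p+1 : ℝ) = t / t ^ (2/p : ℝ) := by
      rw [eq_div_iff htp.ne', mul_comm]; exact e2
    rw [hBdef]
    have h2p0 : ((2:ℝ) ^ (2/p : ℝ)) ≠ 0 := by positivity
    rw [show (-(-2/p + 1) : ℝ) = (2-p)/p from by field_simp; ring]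
    field_simp
  have hL : 0 ≤ t ^ (1/p) * g t := mul_nonneg (Real.rpow_nonneg ht.le _) hgt0
  have hR : 0 ≤ (2:ℝ) ^ (1/p) * (2 - p) ^ (-(1/p)) * M := by positivity
  have hsq : (t ^ (1/p) * g t) ^ 2 ≤ ((2:ℝ) ^ (1/p) * (2 - p) ^ (-(1/p)) * M) ^ 2 := by
    have l1 : (t ^ (1/p : ℝ)) ^ 2 = t ^ (2/p : ℝ) := by
      rw [← Real.rpow_natCast (t ^ (1/p : ℝ)) 2, ← Real.rpow_mul ht.le,
        show ((1/p) * ((2:ℕ):ℝ) : ℝ) = 2/p by push_cast; ring]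
    have l2 : ((2:ℝ) ^ (1/p : ℝ)) ^ 2 = (2:ℝ) ^ (2/p : ℝ) := by
      rw [← Real.rpow_natCast ((2:ℝ) ^ (1/p : ℝ)) 2, ← Real.rpow_mul (by norm_num),
        show ((1/p) * ((2:ℕ):ℝ) : ℝ) = 2/p by push_cast; ring]
    have l3 : ((2-p : ℝ) ^ (-(1/p) : ℝ)) ^ 2 = (2-p) ^ (-2/p : ℝ) := by
      rw [← Real.rpow_natCast ((2-p:ℝ) ^ (-(1/p) : ℝ)) 2, ← Real.rpow_mul hp2'.le,
        show (-(1/p) * ((2:ℕ):ℝ) : ℝ) = -2/p by push_cast; ring]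
    calc (t ^ (1/p) * g t) ^ 2 = t ^ (2/p : ℝ) * g t ^ 2 := by rw [mul_pow, l1]
      _ ≤ 2 ^ (2/p : ℝ) * (2 - p) ^ (-2/p : ℝ) * M ^ 2 := hfin
      _ = ((2:ℝ) ^ (1/p) * (2 - p) ^ (-(1/p)) * M) ^ 2 := by rw [mul_pow, mul_pow, l2, l3]
  exact (pow_le_pow_iff_left₀ hL hR two_ne_zero).1 hsq
end

section
/- Let p ∈ (0,∞), q ∈ (0,∞), and r defined by 1/r = 1/p + 1/q. If S and T are compact operators on a Hilbert space with singular values μ_j(S) ≤ A (j+1)^{−1/p} and μ_j(T) ≤ B (j+1)^{−1/q} for all j ≥ 0, then μ_j(ST) ≤ γ(p,q) A B (j+1)^{−1/r} for all j ≥ 0, where γ(p,q) = p^{−1/q} q^{−1/p} (p+q)^{1/p+1/q}. -/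
/-- The `j`-th approximation number (= singular value, for compact operators) of a bounded
operator: the distance in operator norm to operators of rank at most `j`. -/
noncomputable def approxNum {H : Type*} [NormedAddCommGroup H] [InnerProductSpace ℂ H]
    (T : H →L[ℂ] H) (j : ℕ) : ℝ :=
  sInf ((fun R : H →L[ℂ] H => ‖T - R‖) '' {R | LinearMap.rank (R : H →ₗ[ℂ] H) ≤ (j : Cardinal)})

section aux

variable {H : Type*} [NormedAddCommGroup H] [InnerProductSpace ℂ H]

lemma approxNum_set_nonempty (T : H →L[ℂ] H) (j : ℕ) :
    ((fun R : H →L[ℂ] H => ‖T - R‖) ''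
      {R | LinearMap.rank (R : H →ₗ[ℂ] H) ≤ (j : Cardinal)}).Nonempty := by
  refine ⟨‖T - 0‖, 0, ?_, rfl⟩
  simp [LinearMap.rank_zero]

lemma approxNum_set_bddBelow (T : H →L[ℂ] H) (j : ℕ) :
    BddBelow ((fun R : H →L[ℂ] H => ‖T - R‖) ''
      {R | LinearMap.rank (R : H →ₗ[ℂ] H) ≤ (j : Cardinal)}) := by
  refine ⟨0, ?_⟩
  rintro x ⟨R, -, rfl⟩
  positivity

lemma approxNum_nonneg (T : H →L[ℂ] H) (j : ℕ) : 0 ≤ approxNum T j := by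
  apply Real.sInf_nonneg
  rintro x ⟨R, -, rfl⟩
  positivity

lemma approxNum_le (T : H →L[ℂ] H) (j : ℕ) (R : H →L[ℂ] H)
    (hR : LinearMap.rank (R : H →ₗ[ℂ] H) ≤ (j : Cardinal)) :
    approxNum T j ≤ ‖T - R‖ :=
  csInf_le (approxNum_set_bddBelow T j) ⟨R, hR, rfl⟩

lemma exists_approx (T : H →L[ℂ] H) (j : ℕ) {ε : ℝ} (hε : 0 < ε) :
    ∃ R : H →L[ℂ] H, LinearMap.rank (R : H →ₗ[ℂ] H) ≤ (j : Cardinal) ∧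
      ‖T - R‖ < approxNum T j + ε := by
  obtain ⟨x, ⟨R, hR, rfl⟩, hx⟩ := Real.lt_sInf_add_pos (approxNum_set_nonempty T j) hε
  exact ⟨R, hR, hx⟩

lemma approxNum_comp_add (S T : H →L[ℂ] H) (m n : ℕ) :
    approxNum (S ∘L T) (m + n) ≤ approxNum S m * approxNum T n := by
  have hSm := approxNum_nonneg S m
  have hTn := approxNum_nonneg T n
  refine le_of_forall_pos_le_add (fun ε hε => ?_)
  set δ : ℝ := min 1 (ε / (approxNum S m + approxNum T n + 1)) with hδdef
  have hδ : 0 < δ := lt_min one_pos (by positivity)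
  obtain ⟨R₁, hR₁, h1⟩ := exists_approx S m hδ
  obtain ⟨R₂, hR₂, h2⟩ := exists_approx T n hδ
  have key : approxNum (S ∘L T) (m + n) ≤ ‖S - R₁‖ * ‖T - R₂‖ := by
    have hrank : LinearMap.rank ((R₁ ∘L T + (S - R₁) ∘L R₂ : H →L[ℂ] H) : H →ₗ[ℂ] H) ≤
        ((m + n : ℕ) : Cardinal) := by
      push_cast
      calc LinearMap.rank ((R₁ ∘L T + (S - R₁) ∘L R₂ : H →L[ℂ] H) : H →ₗ[ℂ] H)
          ≤ LinearMap.rank ((R₁ ∘L T : H →L[ℂ] H) : H →ₗ[ℂ] H) +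
            LinearMap.rank (((S - R₁) ∘L R₂ : H →L[ℂ] H) : H →ₗ[ℂ] H) := by
            rw [ContinuousLinearMap.coe_add]; exact LinearMap.rank_add_le _ _
        _ ≤ (m : Cardinal) + (n : Cardinal) := by
            refine add_le_add ?_ ?_
            · rw [ContinuousLinearMap.toLinearMap_comp]
              exact le_trans (LinearMap.rank_comp_le_left _ _) hR₁
            · rw [ContinuousLinearMap.toLinearMap_comp]
              exact le_trans (LinearMap.rank_comp_le_right _ _) hR₂
    have hdiff : S ∘L T - (R₁ ∘L T + (S - R₁) ∘L R₂) = (S - R₁) ∘L (T - R₂) := by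
      ext x
      simp [map_sub]
      abel
    calc approxNum (S ∘L T) (m + n) ≤ ‖S ∘L T - (R₁ ∘L T + (S - R₁) ∘L R₂)‖ :=
          approxNum_le _ _ _ hrank
      _ = ‖(S - R₁) ∘L (T - R₂)‖ := by rw [hdiff]
      _ ≤ ‖S - R₁‖ * ‖T - R₂‖ := ContinuousLinearMap.opNorm_comp_le _ _
  have hδ1 : δ ≤ 1 := min_le_left _ _
  have hδ2 : δ * (approxNum S m + approxNum T n + 1) ≤ ε := by
    have : δ ≤ ε / (approxNum S m + approxNum T n + 1) := min_le_right _ _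
    calc δ * (approxNum S m + approxNum T n + 1)
        ≤ (ε / (approxNum S m + approxNum T n + 1)) * (approxNum S m + approxNum T n + 1) := by
          apply mul_le_mul_of_nonneg_right this (by positivity)
      _ = ε := by field_simp
  have hn1 : (0:ℝ) ≤ ‖S - R₁‖ := norm_nonneg _
  have hn2 : (0:ℝ) ≤ ‖T - R₂‖ := norm_nonneg _
  nlinarith [mul_le_mul (le_of_lt h1) (le_of_lt h2) hn2 (by linarith : (0:ℝ) ≤ approxNum S m + δ)]

end aux

/-- Hölder inequality for weak Schatten quasi-norms with the constant
`γ(p,q) = p^{−1/q} q^{−1/p} (p+q)^{1/p+1/q}`: if `μ_j(S) ≤ A (j+1)^{−1/p}` and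
`μ_j(T) ≤ B (j+1)^{−1/q}`, then `μ_j(ST) ≤ γ(p,q) A B (j+1)^{−1/r}` with `1/r = 1/p + 1/q`. -/
theorem stmt_12 {H : Type*} [NormedAddCommGroup H] [InnerProductSpace ℂ H] [CompleteSpace H]
    (p q r : ℝ) (hp : 0 < p) (hq : 0 < q) (hr : 1/r = 1/p + 1/q)
    (S T : H →L[ℂ] H) (hS : IsCompactOperator S) (hT : IsCompactOperator T)
    (A B : ℝ)
    (hA : ∀ j : ℕ, approxNum S j ≤ A * ((j : ℝ) + 1) ^ (-(1/p)))
    (hB : ∀ j : ℕ, approxNum T j ≤ B * ((j : ℝ) + 1) ^ (-(1/q))) :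
    ∀ j : ℕ, approxNum (S ∘L T) j ≤
      (p ^ (-(1/q)) * q ^ (-(1/p)) * (p + q) ^ (1/p + 1/q)) * A * B *
        ((j : ℝ) + 1) ^ (-(1/r)) := by
  intro j
  have hs : 0 < p + q := by linarith
  set c : ℝ := (j : ℝ) + 1 with hc
  have hcpos : 0 < c := by positivity
  have hA0 : 0 ≤ A := by
    have := hA 0
    simpa using (approxNum_nonneg S 0).trans this
  have hB0 : 0 ≤ B := by
    have := hB 0
    simpa using (approxNum_nonneg T 0).trans this
  -- choose the split point
  set t : ℝ := q * c / (p + q) with ht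
  have htpos : 0 < t := by positivity
  have htle : t ≤ c := by
    rw [ht, div_le_iff₀ hs]
    nlinarith
  have hceil1 : 1 ≤ ⌈t⌉₊ := Nat.one_le_ceil_iff.mpr htpos
  have hceilj : ⌈t⌉₊ ≤ j + 1 := by
    apply Nat.ceil_le.mpr
    push_cast
    linarith
  set m : ℕ := ⌈t⌉₊ - 1 with hm
  set n : ℕ := j - m with hn
  have hmn : m + n = j := by omega
  have hm1 : ((m : ℝ) + 1) = (⌈t⌉₊ : ℝ) := by
    have : m + 1 = ⌈t⌉₊ := by omega
    rw [← this]; push_cast; ring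
  have hm1t : t ≤ (m : ℝ) + 1 := by rw [hm1]; exact Nat.le_ceil t
  have hn1t : p * c / (p + q) ≤ (n : ℝ) + 1 := by
    have hceillt : (⌈t⌉₊ : ℝ) < t + 1 := Nat.ceil_lt_add_one htpos.le
    have hnval : (n : ℝ) = (j : ℝ) - (m : ℝ) := by
      have : (n : ℕ) + m = j := by omega
      push_cast [← this]; ring
    have : (m : ℝ) < t := by
      have := hm1; nlinarith [hceillt]
    have hkey : c - t ≤ (n : ℝ) + 1 := by rw [hnval]; simp only [hc]; linarith
    have : c - t = p * c / (p + q) := by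
      rw [ht]; field_simp; ring
    linarith
  -- main estimate
  have step1 : approxNum (S ∘L T) j ≤ approxNum S m * approxNum T n := by
    rw [← hmn]; exact approxNum_comp_add S T m n
  have stepS : approxNum S m ≤ A * (q * c / (p + q)) ^ (-(1/p)) := by
    refine (hA m).trans ?_
    apply mul_le_mul_of_nonneg_left _ hA0
    exact Real.rpow_le_rpow_of_nonpos htpos hm1t (neg_nonpos.mpr (by positivity))
  have stepT : approxNum T n ≤ B * (p * c / (p + q)) ^ (-(1/q)) := by
    refine (hB n).trans ?_
    apply mul_le_mul_of_nonneg_left _ hB0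
    exact Real.rpow_le_rpow_of_nonpos (by positivity) hn1t (neg_nonpos.mpr (by positivity))
  have step2 : approxNum S m * approxNum T n ≤
      (A * (q * c / (p + q)) ^ (-(1/p))) * (B * (p * c / (p + q)) ^ (-(1/q))) :=
    mul_le_mul stepS stepT (approxNum_nonneg T n) (by positivity)
  have halg : (q * c / (p + q)) ^ (-(1/p)) * (p * c / (p + q)) ^ (-(1/q)) =
      p ^ (-(1/q)) * q ^ (-(1/p)) * (p + q) ^ (1/p + 1/q) * c ^ (-(1/r)) := by
    have hexp : -(1/r) = -(1/p) + -(1/q) := by rw [hr]; ring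
    rw [hexp, Real.rpow_add hcpos]
    rw [Real.div_rpow (by positivity) hs.le, Real.div_rpow (by positivity) hs.le,
      Real.mul_rpow hq.le hcpos.le, Real.mul_rpow hp.le hcpos.le,
      Real.rpow_add hs, Real.rpow_neg hs.le (1/p), Real.rpow_neg hs.le (1/q)]
    have h1 : (p+q) ^ (1/p) ≠ 0 := ne_of_gt (Real.rpow_pos_of_pos hs _)
    have h2 : (p+q) ^ (1/q) ≠ 0 := ne_of_gt (Real.rpow_pos_of_pos hs _)
    field_simp
  calc approxNum (S ∘L T) j
      ≤ (A * (q * c / (p + q)) ^ (-(1/p))) * (B * (p * c / (p + q)) ^ (-(1/q))) :=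
        step1.trans step2
    _ = A * B * ((q * c / (p + q)) ^ (-(1/p)) * (p * c / (p + q)) ^ (-(1/q))) := by ring
    _ = (p ^ (-(1/q)) * q ^ (-(1/p)) * (p + q) ^ (1/p + 1/q)) * A * B * c ^ (-(1/r)) := by
        rw [halg]; ring
end
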